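/- arXiv:1511.08462 — 2 statements merged into one kernel-verified Lean document; each statement's English description precedes it below -/
import Mathlib

section
/- Let J ⊆ ℝ be an open interval and (f_n) a sequence of convex functions J → ℝ converging pointwise to a finite function f. Then for every x ∈ J, limsup_{n→∞} D⁺f_n(x) ≤ D⁺f(x) and liminf_{n→∞} D⁻f_n(x) ≥ D⁻f(x), where D⁺ and D⁻ denote the right and left derivatives (which exist for convex functions). -/
open Filter Topology

/-- Slope monotonicity for convex functions, in `slope` form. -/
lemma slope_mono_aux {J : Set ℝ} {f : ℝ → ℝ} (hf : ConvexOn ℝ J f) {x a b : ℝ}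
    (hx : x ∈ J) (ha : a ∈ J) (hb : b ∈ J) (hax : a ≠ x) (hbx : b ≠ x) (hab : a ≤ b) :
    slope f x a ≤ slope f x b := by
  rw [slope_def_field, slope_def_field]
  exact hf.secant_mono hx ha hb hax hbx hab

/-- If the slope at `x` tends to `d` along a filter inside `𝓝[≠] x`, then `d` is at most the
slope to any point `y > x` of `J`. -/
lemma aux_upper {J : Set ℝ} (hJ : IsOpen J) {f : ℝ → ℝ} (hf : ConvexOn ℝ J f)
    {x y d : ℝ} (hx : x ∈ J) (hy : y ∈ J) (hxy : x < y)
    {l : Filter ℝ} [l.NeBot] (hl : l ≤ 𝓝[≠] x)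
    (hd : Filter.Tendsto (slope f x) l (𝓝 d)) : d ≤ slope f x y := by
  refine le_of_tendsto hd ?_
  have h1 : ∀ᶠ z in l, z ∈ J :=
    hl (eventually_nhdsWithin_of_eventually_nhds (hJ.eventually_mem hx))
  have h2 : ∀ᶠ z in l, z < y :=
    hl (eventually_nhdsWithin_of_eventually_nhds (Filter.Tendsto.eventually_lt_const hxy tendsto_id))
  have h3 : ∀ᶠ z in l, z ≠ x := hl self_mem_nhdsWithin
  filter_upwards [h1, h2, h3] with z hz1 hz2 hz3
  exact slope_mono_aux hf hx hz1 hy hz3 (ne_of_gt hxy) hz2.le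

/-- If the slope at `x` tends to `d` along a filter inside `𝓝[≠] x`, then `d` is at least the
slope to any point `y < x` of `J`. -/
lemma aux_lower {J : Set ℝ} (hJ : IsOpen J) {f : ℝ → ℝ} (hf : ConvexOn ℝ J f)
    {x y d : ℝ} (hx : x ∈ J) (hy : y ∈ J) (hxy : y < x)
    {l : Filter ℝ} [l.NeBot] (hl : l ≤ 𝓝[≠] x)
    (hd : Filter.Tendsto (slope f x) l (𝓝 d)) : slope f x y ≤ d := by
  refine ge_of_tendsto hd ?_
  have h1 : ∀ᶠ z in l, z ∈ J :=
    hl (eventually_nhdsWithin_of_eventually_nhds (hJ.eventually_mem hx))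
  have h2 : ∀ᶠ z in l, y < z :=
    hl (eventually_nhdsWithin_of_eventually_nhds (Filter.Tendsto.eventually_const_lt hxy tendsto_id))
  have h3 : ∀ᶠ z in l, z ≠ x := hl self_mem_nhdsWithin
  filter_upwards [h1, h2, h3] with z hz1 hz2 hz3
  exact slope_mono_aux hf hx hy hz1 (ne_of_lt hxy) hz3 hz2.le

lemma nhdsGT_le_ne (x : ℝ) : 𝓝[>] x ≤ 𝓝[≠] x :=
  nhdsWithin_mono x fun z hz => ne_of_gt hz

lemma nhdsLT_le_ne (x : ℝ) : 𝓝[<] x ≤ 𝓝[≠] x :=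
  nhdsWithin_mono x fun z hz => ne_of_lt hz

lemma tendsto_slope_right {f : ℝ → ℝ} {x d : ℝ} (h : HasDerivWithinAt f d (Set.Ioi x) x) :
    Filter.Tendsto (slope f x) (𝓝[>] x) (𝓝 d) := by
  have := hasDerivWithinAt_iff_tendsto_slope.mp h
  rwa [Set.diff_singleton_eq_self (by simp)] at this

lemma tendsto_slope_left {f : ℝ → ℝ} {x d : ℝ} (h : HasDerivWithinAt f d (Set.Iio x) x) :
    Filter.Tendsto (slope f x) (𝓝[<] x) (𝓝 d) := by
  have := hasDerivWithinAt_iff_tendsto_slope.mp h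
  rwa [Set.diff_singleton_eq_self (by simp)] at this

/-- Let `J ⊆ ℝ` be an open interval and `(f n)` a sequence of convex functions on `J`
converging pointwise to a finite function `g`.  Denoting by `dp n x` / `dm n x` the right /
left derivatives of `f n` at `x` and by `gp x` / `gm x` those of `g` (which exist for convex
functions), for every `x ∈ J` we have
`limsup_n dp n x ≤ gp x` and `liminf_n dm n x ≥ gm x`. -/
theorem stmt_0 (J : Set ℝ) (hJopen : IsOpen J) (hJint : Convex ℝ J)
    (f : ℕ → ℝ → ℝ) (g : ℝ → ℝ)
    (hconv : ∀ n, ConvexOn ℝ J (f n)) (hgconv : ConvexOn ℝ J g)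
    (hlim : ∀ x ∈ J, Tendsto (fun n => f n x) atTop (nhds (g x)))
    (dp dm : ℕ → ℝ → ℝ) (gp gm : ℝ → ℝ)
    (hdp : ∀ n, ∀ x ∈ J, HasDerivWithinAt (f n) (dp n x) (Set.Ioi x) x)
    (hdm : ∀ n, ∀ x ∈ J, HasDerivWithinAt (f n) (dm n x) (Set.Iio x) x)
    (hgp : ∀ x ∈ J, HasDerivWithinAt g (gp x) (Set.Ioi x) x)
    (hgm : ∀ x ∈ J, HasDerivWithinAt g (gm x) (Set.Iio x) x) :
    ∀ x ∈ J,
      limsup (fun n => dp n x) atTop ≤ gp x ∧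
      gm x ≤ liminf (fun n => dm n x) atTop := by
  intro x hx
  obtain ⟨ε, hε, hball⟩ := Metric.isOpen_iff.mp hJopen x hx
  have hy₀ : x - ε / 2 ∈ J := by
    apply hball
    rw [Metric.mem_ball, Real.dist_eq]
    rw [show x - ε / 2 - x = -(ε / 2) by ring, abs_neg, abs_of_pos (by linarith)]
    linarith
  have hy₁ : x + ε / 2 ∈ J := by
    apply hball
    rw [Metric.mem_ball, Real.dist_eq]
    rw [show x + ε / 2 - x = ε / 2 by ring, abs_of_pos (by linarith)]
    linarith
  -- pointwise convergence of slopes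
  have htend : ∀ y ∈ J, y ≠ x →
      Tendsto (fun n => slope (f n) x y) atTop (𝓝 (slope g x y)) := by
    intro y hy hyx
    have := ((hlim y hy).sub (hlim x hx)).div_const (y - x)
    simpa only [slope_def_field] using this
  -- upper bounds for dp
  have hdp_le : ∀ n, ∀ y ∈ J, x < y → dp n x ≤ slope (f n) x y := fun n y hy hxy =>
    aux_upper hJopen (hconv n) hx hy hxy (nhdsGT_le_ne x) (tendsto_slope_right (hdp n x hx))
  have hdp_ge : ∀ n, ∀ y ∈ J, y < x → slope (f n) x y ≤ dp n x := fun n y hy hxy =>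
    aux_lower hJopen (hconv n) hx hy hxy (nhdsGT_le_ne x) (tendsto_slope_right (hdp n x hx))
  have hdm_le : ∀ n, ∀ y ∈ J, x < y → dm n x ≤ slope (f n) x y := fun n y hy hxy =>
    aux_upper hJopen (hconv n) hx hy hxy (nhdsLT_le_ne x) (tendsto_slope_left (hdm n x hx))
  have hdm_ge : ∀ n, ∀ y ∈ J, y < x → slope (f n) x y ≤ dm n x := fun n y hy hxy =>
    aux_lower hJopen (hconv n) hx hy hxy (nhdsLT_le_ne x) (tendsto_slope_left (hdm n x hx))
  -- coboundedness
  have hcb_dp : IsCoboundedUnder (· ≤ ·) atTop (fun n => dp n x) := by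
    apply Filter.IsBoundedUnder.isCoboundedUnder_le
    exact (htend _ hy₀ (by intro h; linarith [congrArg id h])).isBoundedUnder_ge.mono_ge
      (Eventually.of_forall fun n => hdp_ge n _ hy₀ (by linarith))
  have hcb_dm : IsCoboundedUnder (· ≥ ·) atTop (fun n => dm n x) := by
    apply Filter.IsBoundedUnder.isCoboundedUnder_ge
    exact (htend _ hy₁ (by intro h; linarith [congrArg id h])).isBoundedUnder_le.mono_le
      (Eventually.of_forall fun n => hdm_le n _ hy₁ (by linarith))
  constructor
  · -- limsup dp ≤ gp x
    have hub : ∀ y ∈ J, x < y → limsup (fun n => dp n x) atTop ≤ slope g x y := by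
      intro y hy hxy
      have h1 : limsup (fun n => dp n x) atTop ≤ limsup (fun n => slope (f n) x y) atTop :=
        limsup_le_limsup (Eventually.of_forall fun n => hdp_le n y hy hxy) hcb_dp
          (htend y hy (ne_of_gt hxy)).isBoundedUnder_le
      rw [(htend y hy (ne_of_gt hxy)).limsup_eq] at h1
      exact h1
    refine ge_of_tendsto (tendsto_slope_right (hgp x hx)) ?_
    have h1 : ∀ᶠ y in 𝓝[>] x, y ∈ J :=
      (nhdsGT_le_ne x).trans (nhdsWithin_le_nhds) (hJopen.eventually_mem hx)
    filter_upwards [h1, self_mem_nhdsWithin] with y hy1 hy2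
    exact hub y hy1 hy2
  · -- gm x ≤ liminf dm
    have hlb : ∀ y ∈ J, y < x → slope g x y ≤ liminf (fun n => dm n x) atTop := by
      intro y hy hyx
      have h1 : liminf (fun n => slope (f n) x y) atTop ≤ liminf (fun n => dm n x) atTop :=
        liminf_le_liminf (Eventually.of_forall fun n => hdm_ge n y hy hyx)
          (htend y hy (ne_of_lt hyx)).isBoundedUnder_ge hcb_dm
      rw [(htend y hy (ne_of_lt hyx)).liminf_eq] at h1
      exact h1
    refine le_of_tendsto (tendsto_slope_left (hgm x hx)) ?_
    have h1 : ∀ᶠ y in 𝓝[<] x, y ∈ J :=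
      (nhdsLT_le_ne x).trans (nhdsWithin_le_nhds) (hJopen.eventually_mem hx)
    filter_upwards [h1, self_mem_nhdsWithin] with y hy1 hy2
    exact hlb y hy1 hy2
end

section
/- Let x : [0,T] → ℝ≥0 be absolutely continuous and satisfy x'(t) + α x(t) ≤ g(t) x(t)^{1-β} + b(t) for almost every t ∈ [0,T], where α > 0, 0 < β < 1, and g, b are nonnegative integrable functions on [0,T]. Then for all t ∈ [0,T], (α/2) ∫₀ᵗ x(τ)^β dτ ≤ β⁻¹ (1 + x(0))^β + ∫₀ᵗ (α + g(τ) + b(τ)) dτ. -/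
open MeasureTheory intervalIntegral


lemma concave_aux {β : ℝ} (hβ0 : 0 < β) (hβ1 : β < 1) {u v : ℝ} (hu : 0 ≤ u) (hv : 0 ≤ v) :
    β⁻¹ * (1 + v) ^ β - β⁻¹ * (1 + u) ^ β ≤ (1 + u) ^ (β - 1) * (v - u) := by
  set a := 1 + u with ha
  set b := 1 + v with hb
  have ha0 : (0:ℝ) < a := by rw [ha]; linarith
  have hb0 : (0:ℝ) < b := by rw [hb]; linarith
  have hs : (-1:ℝ) ≤ (b - a) / a := by
    rw [le_div_iff₀ ha0]; linarith
  have h1 : (1 + (b - a)/a) ^ β ≤ 1 + β * ((b - a)/a) :=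
    rpow_one_add_le_one_add_mul_self hs hβ0.le hβ1.le
  have hba : 1 + (b - a)/a = b / a := by field_simp; ring
  rw [hba] at h1
  have hapow : (0:ℝ) < a ^ β := Real.rpow_pos_of_pos ha0 β
  have h2 : b ^ β ≤ a ^ β + β * (b - a) * a ^ (β - 1) := by
    have hsub : a ^ (β - 1) = a ^ β / a := by
      rw [Real.rpow_sub ha0, Real.rpow_one]
    calc b ^ β = (b/a) ^ β * a ^ β := by
          rw [Real.div_rpow hb0.le ha0.le, div_mul_cancel₀]; exact hapow.ne'
      _ ≤ (1 + β * ((b - a)/a)) * a ^ β := mul_le_mul_of_nonneg_right h1 hapow.le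
      _ = a ^ β + β * (b - a) * (a ^ β / a) := by field_simp
      _ = a ^ β + β * (b - a) * a ^ (β - 1) := by rw [hsub]
  have hβinv : 0 < β⁻¹ := by positivity
  have h4 : β⁻¹ * (b ^ β - a ^ β) ≤ β⁻¹ * (β * (b - a) * a ^ (β - 1)) :=
    mul_le_mul_of_nonneg_left (by linarith) hβinv.le
  have h5 : β⁻¹ * (β * (b - a) * a ^ (β - 1)) = a ^ (β - 1) * (b - a) := by
    field_simp
  rw [h5] at h4
  have hvu : b - a = v - u := by rw [ha, hb]; ring
  rw [hvu] at h4
  linarith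

lemma chain_aux {β : ℝ} (hβ0 : 0 < β) (hβ1 : β < 1) {t : ℝ} (ht : 0 ≤ t)
    {x x' : ℝ → ℝ}
    (hxnn : ∀ s ∈ Set.Icc (0:ℝ) t, 0 ≤ x s)
    (hxcont : ContinuousOn x (Set.Icc (0:ℝ) t))
    (hint : IntervalIntegrable x' volume 0 t)
    (hAC : ∀ s ∈ Set.Icc (0:ℝ) t, x s = x 0 + ∫ τ in (0:ℝ)..s, x' τ) :
    β⁻¹ * (1 + x t) ^ β - β⁻¹ * (1 + x 0) ^ β ≤
      ∫ τ in (0:ℝ)..t, (1 + x τ) ^ (β - 1) * x' τ := by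
  rcases eq_or_lt_of_le ht with rfl | ht0
  · simp
  set u : ℝ → ℝ := fun s => (1 + x s) ^ (β - 1) with hu
  have hucont : ContinuousOn u (Set.Icc 0 t) := by
    apply ContinuousOn.rpow_const (continuousOn_const.add hxcont)
    intro s hs
    exact Or.inl (by have := hxnn s hs; show (1:ℝ) + x s ≠ 0; positivity)
  have huIcc : Set.uIcc (0:ℝ) t = Set.Icc 0 t := Set.uIcc_of_le ht
  have huix : IntervalIntegrable (fun τ => u τ * x' τ) volume 0 t :=
    hint.continuousOn_mul (huIcc ▸ hucont)
  have habs : IntervalIntegrable (fun τ => |x' τ|) volume 0 t := hint.abs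
  set C : ℝ := ∫ τ in (0:ℝ)..t, |x' τ| with hC
  have hC0 : 0 ≤ C := integral_nonneg ht (fun τ _ => abs_nonneg _)
  apply le_of_forall_pos_le_add
  intro ε hε
  set ε' : ℝ := ε / (C + 1) with hε'def
  have hε' : 0 < ε' := by positivity
  have hUC := (isCompact_Icc : IsCompact (Set.Icc (0:ℝ) t)).uniformContinuousOn_of_continuous hucont
  rw [Metric.uniformContinuousOn_iff] at hUC
  obtain ⟨δ, hδ, hδ'⟩ := hUC ε' hε'
  obtain ⟨n, hn⟩ := exists_nat_gt (t / δ)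
  have hn0 : (0:ℝ) < n := lt_of_le_of_lt (by positivity) hn
  have hstep0 : 0 ≤ t / n := by positivity
  have hstep : t / n < δ := by
    rw [div_lt_iff₀ hn0]
    rw [div_lt_iff₀ hδ] at hn
    nlinarith
  set a : ℕ → ℝ := fun i => i * (t / n) with ha
  have ha0 : a 0 = 0 := by simp [ha]
  have han : a n = t := by simp only [ha]; field_simp
  have hmono : ∀ i : ℕ, a i ≤ a (i + 1) := by
    intro i
    apply mul_le_mul_of_nonneg_right _ hstep0
    exact_mod_cast Nat.le_succ i
  have hgap : ∀ i : ℕ, a (i + 1) - a i = t / n := by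
    intro i; rw [ha]; push_cast; ring
  have hmem : ∀ i ≤ n, a i ∈ Set.Icc (0:ℝ) t := by
    intro i hi
    constructor
    · rw [ha]; positivity
    · rw [← han]
      exact mul_le_mul_of_nonneg_right (by exact_mod_cast hi) hstep0
  have hintsub : ∀ i ≤ n, ∀ j ≤ n, IntervalIntegrable x' volume (a i) (a j) := by
    intro i hi j hj
    exact hint.mono_set (Set.uIcc_subset_uIcc (huIcc ▸ hmem i hi) (huIcc ▸ hmem j hj))
  have hint0 : ∀ j ≤ n, IntervalIntegrable x' volume 0 (a j) := by
    intro j hj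
    exact ha0 ▸ hintsub 0 (Nat.zero_le n) j hj
  set F : ℝ → ℝ := fun s => β⁻¹ * (1 + x s) ^ β with hF
  set h : ℝ → ℝ := fun τ => u τ * x' τ + ε' * |x' τ| with hh
  have hhint : ∀ i ≤ n, ∀ j ≤ n, IntervalIntegrable h volume (a i) (a j) := by
    intro i hi j hj
    apply IntervalIntegrable.add
    · exact huix.mono_set (Set.uIcc_subset_uIcc (huIcc ▸ hmem i hi) (huIcc ▸ hmem j hj))
    · exact (habs.const_mul ε').mono_set
        (Set.uIcc_subset_uIcc (huIcc ▸ hmem i hi) (huIcc ▸ hmem j hj))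
  have key : ∀ k < n, F (a (k + 1)) - F (a k) ≤ ∫ τ in a k..a (k + 1), h τ := by
    intro k hk
    have hk1 : k + 1 ≤ n := hk
    have hmk : a k ∈ Set.Icc (0:ℝ) t := hmem k hk.le
    have hmk1 : a (k + 1) ∈ Set.Icc (0:ℝ) t := hmem (k + 1) hk1
    have hxdiff : x (a (k + 1)) - x (a k) = ∫ τ in a k..a (k + 1), x' τ := by
      rw [hAC _ hmk1, hAC _ hmk, add_sub_add_left_eq_sub]
      exact integral_interval_sub_left (hint0 (k+1) hk1) (hint0 k hk.le)
    have hcon : F (a (k + 1)) - F (a k) ≤ u (a k) * (x (a (k + 1)) - x (a k)) :=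
      concave_aux hβ0 hβ1 (hxnn _ hmk) (hxnn _ hmk1)
    rw [hxdiff] at hcon
    have hconst : u (a k) * ∫ τ in a k..a (k + 1), x' τ
        = ∫ τ in a k..a (k + 1), u (a k) * x' τ := (intervalIntegral.integral_const_mul _ _).symm
    have hmono2 : (∫ τ in a k..a (k + 1), u (a k) * x' τ) ≤ ∫ τ in a k..a (k + 1), h τ := by
      apply integral_mono_on (hmono k)
        ((hintsub k hk.le (k+1) hk1).const_mul (u (a k))) (hhint k hk.le (k+1) hk1)
      intro τ hτ
      have hτmem : τ ∈ Set.Icc (0:ℝ) t := ⟨le_trans hmk.1 hτ.1, le_trans hτ.2 hmk1.2⟩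
      have hdist : dist (a k) τ < δ := by
        rw [Real.dist_eq, abs_sub_comm, abs_of_nonneg (by linarith [hτ.1])]
        have := hgap k
        linarith [hτ.2]
      have hud := hδ' (a k) hmk τ hτmem hdist
      rw [Real.dist_eq] at hud
      have h1 : (u (a k) - u τ) * x' τ ≤ |u (a k) - u τ| * |x' τ| := by
        calc (u (a k) - u τ) * x' τ ≤ |(u (a k) - u τ) * x' τ| := le_abs_self _
          _ = |u (a k) - u τ| * |x' τ| := abs_mul _ _
      have h2 : |u (a k) - u τ| * |x' τ| ≤ ε' * |x' τ| :=
        mul_le_mul_of_nonneg_right hud.le (abs_nonneg _)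
      show u (a k) * x' τ ≤ u τ * x' τ + ε' * |x' τ|
      nlinarith
    linarith
  have hsum := Finset.sum_le_sum (fun k hk => key k (Finset.mem_range.mp hk))
  rw [Finset.sum_range_sub (fun k => F (a k))] at hsum
  rw [sum_integral_adjacent_intervals (fun k hk => hhint k hk.le (k+1) hk)] at hsum
  rw [ha0, han] at hsum
  have hsplit : (∫ τ in (0:ℝ)..t, h τ)
      = (∫ τ in (0:ℝ)..t, u τ * x' τ) + ε' * C := by
    rw [hh]
    rw [integral_add huix (habs.const_mul ε'), intervalIntegral.integral_const_mul]
  have hεC : ε' * C ≤ ε := by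
    rw [hε'def, div_mul_eq_mul_div, div_le_iff₀ (by positivity)]
    nlinarith
  rw [hsplit] at hsum
  have : F t - F 0 ≤ (∫ τ in (0:ℝ)..t, u τ * x' τ) + ε := by linarith
  exact this


lemma pointwise_aux {α β : ℝ} (hα : 0 < α) (hβ0 : 0 < β) (hβ1 : β < 1)
    {X G B D : ℝ} (hX : 0 ≤ X) (hG : 0 ≤ G) (hB : 0 ≤ B)
    (h : D + α * X ≤ G * X ^ (1 - β) + B) :
    α / 2 * X ^ β + (1 + X) ^ (β - 1) * D ≤ α + G + B := by
  set m : ℝ := (1 + X) ^ (β - 1) with hm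
  have h1X : (0:ℝ) < 1 + X := by linarith
  have hm0 : 0 ≤ m := Real.rpow_nonneg h1X.le _
  have hm1 : m ≤ 1 := Real.rpow_le_one_of_one_le_of_nonpos (by linarith) (by linarith)
  have hmx1 : m * X ^ (1 - β) ≤ 1 := by
    have hle : X ^ (1 - β) ≤ (1 + X) ^ (1 - β) :=
      Real.rpow_le_rpow hX (by linarith) (by linarith)
    have heq : m * (1 + X) ^ (1 - β) = 1 := by
      rw [hm, ← Real.rpow_add h1X]
      norm_num
    calc m * X ^ (1 - β) ≤ m * (1 + X) ^ (1 - β) := mul_le_mul_of_nonneg_left hle hm0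
      _ = 1 := heq
  have hhalf : α / 2 * X ^ β ≤ α + α * (m * X) := by
    rcases le_or_gt X 1 with hX1 | hX1
    · have hXβ : X ^ β ≤ 1 := Real.rpow_le_one hX hX1 hβ0.le
      nlinarith [mul_nonneg hm0 hX]
    · have hX0 : (0:ℝ) < X := by linarith
      have hge : (2 * X) ^ (β - 1) ≤ m :=
        Real.rpow_le_rpow_of_nonpos (by linarith) (by linarith) (by linarith)
      have hmul : (2 * X) ^ (β - 1) = 2 ^ (β - 1) * X ^ (β - 1) :=
        Real.mul_rpow (by norm_num) hX0.le
      have h2 : (2:ℝ)⁻¹ ≤ 2 ^ (β - 1) := by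
        have := Real.rpow_le_rpow_of_exponent_le (x := 2) (by norm_num) (by linarith : (-1:ℝ) ≤ β - 1)
        rwa [Real.rpow_neg_one] at this
      have hxx : X ^ (β - 1) * X = X ^ β := by
        have h := Real.rpow_add hX0 (β - 1) 1
        rw [Real.rpow_one] at h
        rw [← h]; norm_num
      have hXβ0 : 0 ≤ X ^ β := Real.rpow_nonneg hX0.le _
      have : (1/2) * X ^ β ≤ m * X := by
        calc (1/2) * X ^ β = (2:ℝ)⁻¹ * (X ^ (β - 1) * X) := by rw [hxx]; ring
          _ ≤ 2 ^ (β - 1) * (X ^ (β - 1) * X) := by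
              apply mul_le_mul_of_nonneg_right h2
              positivity
          _ = (2 * X) ^ (β - 1) * X := by rw [hmul]; ring
          _ ≤ m * X := mul_le_mul_of_nonneg_right hge hX0.le
      nlinarith
  have hD : m * D ≤ G + B - α * (m * X) := by
    have h5 : m * (D + α * X) ≤ m * (G * X ^ (1 - β) + B) := mul_le_mul_of_nonneg_left h hm0
    have h6 : m * (G * X ^ (1 - β)) ≤ G := by
      have : m * (G * X ^ (1 - β)) = G * (m * X ^ (1 - β)) := by ring
      rw [this]
      nlinarith [Real.rpow_nonneg hX (1 - β), mul_nonneg hm0 (Real.rpow_nonneg hX (1 - β))]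
    have h7 : m * B ≤ B := by nlinarith
    nlinarith
  nlinarith


/-- Let `x : [0,T] → ℝ≥0` be absolutely continuous (encoded by the fundamental theorem of
calculus with an integrable a.e. derivative `x'`) satisfying
`x'(t) + α x(t) ≤ g(t) x(t)^{1-β} + b(t)` for a.e. `t ∈ [0,T]`, where `α > 0`, `0 < β < 1`
and `g, b` are nonnegative integrable functions on `[0,T]`.  Then for all `t ∈ [0,T]`,
`(α/2) ∫₀ᵗ x(τ)^β dτ ≤ β⁻¹ (1 + x 0)^β + ∫₀ᵗ (α + g τ + b τ) dτ`. -/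
theorem stmt_1 (T α β : ℝ) (hT : 0 < T) (hα : 0 < α) (hβ0 : 0 < β) (hβ1 : β < 1)
    (x x' g b : ℝ → ℝ)
    (hxnn : ∀ t ∈ Set.Icc (0:ℝ) T, 0 ≤ x t)
    (hxcont : ContinuousOn x (Set.Icc (0:ℝ) T))
    (hx'int : IntervalIntegrable x' volume 0 T)
    (hAC : ∀ t ∈ Set.Icc (0:ℝ) T, x t = x 0 + ∫ τ in (0:ℝ)..t, x' τ)
    (hgnn : ∀ t ∈ Set.Icc (0:ℝ) T, 0 ≤ g t)
    (hbnn : ∀ t ∈ Set.Icc (0:ℝ) T, 0 ≤ b t)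
    (hgint : IntervalIntegrable g volume 0 T)
    (hbint : IntervalIntegrable b volume 0 T)
    (hineq : ∀ᵐ t ∂(volume.restrict (Set.Icc (0:ℝ) T)),
      x' t + α * x t ≤ g t * x t ^ (1 - β) + b t) :
    ∀ t ∈ Set.Icc (0:ℝ) T,
      α / 2 * ∫ τ in (0:ℝ)..t, x τ ^ β ≤
        β⁻¹ * (1 + x 0) ^ β + ∫ τ in (0:ℝ)..t, (α + g τ + b τ) := by
  rintro t ⟨ht0, htT⟩
  have hsub : Set.Icc (0:ℝ) t ⊆ Set.Icc 0 T := Set.Icc_subset_Icc_right htT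
  have huIccT : Set.uIcc (0:ℝ) T = Set.Icc 0 T := Set.uIcc_of_le hT.le
  have huIcct : Set.uIcc (0:ℝ) t = Set.Icc 0 t := Set.uIcc_of_le ht0
  have hsubu : Set.uIcc (0:ℝ) t ⊆ Set.uIcc 0 T := by rw [huIccT, huIcct]; exact hsub
  have hx't : IntervalIntegrable x' volume 0 t := hx'int.mono_set hsubu
  have hgt : IntervalIntegrable g volume 0 t := hgint.mono_set hsubu
  have hbt : IntervalIntegrable b volume 0 t := hbint.mono_set hsubu
  have hmcont : ContinuousOn (fun τ => (1 + x τ) ^ (β - 1)) (Set.Icc 0 T) := by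
    apply ContinuousOn.rpow_const (continuousOn_const.add hxcont)
    intro s hs
    exact Or.inl (by have := hxnn s hs; show (1:ℝ) + x s ≠ 0; positivity)
  have hxβcont : ContinuousOn (fun τ => x τ ^ β) (Set.Icc 0 T) :=
    hxcont.rpow_const (fun s hs => Or.inr hβ0.le)
  have hxβint : IntervalIntegrable (fun τ => x τ ^ β) volume 0 t :=
    ContinuousOn.intervalIntegrable (huIcct ▸ (hxβcont.mono hsub))
  have hmx'int : IntervalIntegrable (fun τ => (1 + x τ) ^ (β - 1) * x' τ) volume 0 t :=
    hx't.continuousOn_mul (huIcct ▸ (hmcont.mono hsub))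
  have hLHSint : IntervalIntegrable
      (fun τ => α / 2 * x τ ^ β + (1 + x τ) ^ (β - 1) * x' τ) volume 0 t :=
    (hxβint.const_mul _).add hmx'int
  have hRHSint : IntervalIntegrable (fun τ => α + g τ + b τ) volume 0 t :=
    (intervalIntegrable_const.add hgt).add hbt
  have h1 : ∀ᵐ τ ∂(volume.restrict (Set.Icc (0:ℝ) T)),
      α / 2 * x τ ^ β + (1 + x τ) ^ (β - 1) * x' τ ≤ α + g τ + b τ := by
    filter_upwards [hineq, ae_restrict_mem measurableSet_Icc] with τ hτ hτm
    exact pointwise_aux hα hβ0 hβ1 (hxnn τ hτm) (hgnn τ hτm) (hbnn τ hτm) hτ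
  have h2 : ∀ᵐ τ ∂(volume.restrict (Set.Icc (0:ℝ) t)),
      α / 2 * x τ ^ β + (1 + x τ) ^ (β - 1) * x' τ ≤ α + g τ + b τ :=
    ae_restrict_of_ae_restrict_of_subset hsub h1
  have h3 := intervalIntegral.integral_mono_ae_restrict ht0 hLHSint hRHSint h2
  rw [intervalIntegral.integral_add (hxβint.const_mul _) hmx'int,
    intervalIntegral.integral_const_mul] at h3
  have hchain := chain_aux hβ0 hβ1 ht0 (fun s hs => hxnn s (hsub hs)) (hxcont.mono hsub)
    hx't (fun s hs => hAC s (hsub hs))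
  have hpos : 0 ≤ β⁻¹ * (1 + x t) ^ β :=
    mul_nonneg (inv_nonneg.mpr hβ0.le)
      (Real.rpow_nonneg (by have := hxnn t ⟨ht0, htT⟩; linarith) _)
  linarith
end
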